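/- Let G be a group. Then G satisfies condition (2) if and only if G satisfies condition (2)'. That is: (for all g, h in G there exists a positive integer n with g·hⁿ = hⁿ·g) if and only if (for all g, h in G there exist positive integers m, n with g·hᵐ = hⁿ·g). -/
import Mathlib

private lemma comm_pow {G : Type*} [Group G] {g x y : G} (h : g * x = y * g) :
    ∀ j : ℕ, g * x ^ j = y ^ j * g := by
  intro j
  induction j with
  | zero => simp
  | succ j ih =>
    rw [pow_succ, pow_succ, ← mul_assoc, ih, mul_assoc, mul_assoc, h, ← mul_assoc]

private lemma iter_rel {G : Type*} [Group G] {g h : G} {m n : ℕ}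
    (hrel : g * h ^ m = h ^ n * g) :
    ∀ k : ℕ, g ^ k * h ^ (m ^ k) = h ^ (n ^ k) * g ^ k := by
  intro k
  induction k with
  | zero => simp
  | succ k ih =>
    have h1 : g ^ k * h ^ (m ^ k * m) = h ^ (n ^ k * m) * g ^ k := by
      have := comm_pow ih m
      rwa [← pow_mul, ← pow_mul] at this
    have h2 : g * h ^ (m * n ^ k) = h ^ (n * n ^ k) * g := by
      have := comm_pow hrel (n ^ k)
      rwa [← pow_mul, ← pow_mul] at this
    have em : m ^ (k + 1) = m ^ k * m := pow_succ m k
    have en : n ^ (k + 1) = n ^ k * n := pow_succ n k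
    rw [em, en, pow_succ' g k, mul_assoc, h1, ← mul_assoc,
      mul_comm (n ^ k) m, h2, mul_comm (n ^ k) n, mul_assoc]

private lemma nat_cancel {m n s t : ℕ} (hm : 0 < m) (hn : 0 < n)
    (hst : s < t) (heq : n ^ s * m ^ t = m ^ s * n ^ t) : m = n := by
  have h1 : m ^ t = m ^ s * m ^ (t - s) := by rw [← pow_add]; congr 1; omega
  have h2 : n ^ t = n ^ s * n ^ (t - s) := by rw [← pow_add]; congr 1; omega
  rw [h1, h2] at heq
  have heq2 : m ^ s * n ^ s * m ^ (t - s) = m ^ s * n ^ s * n ^ (t - s) := by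
    calc m ^ s * n ^ s * m ^ (t - s) = n ^ s * (m ^ s * m ^ (t - s)) := by ring
      _ = m ^ s * (n ^ s * n ^ (t - s)) := heq
      _ = m ^ s * n ^ s * n ^ (t - s) := by ring
  have h3 := Nat.eq_of_mul_eq_mul_left (by positivity) heq2
  exact Nat.pow_left_injective (by omega) h3

theorem cond2_iff_cond2' (G : Type*) [Group G] :
    (∀ g h : G, ∃ n : ℕ, 0 < n ∧ g * h ^ n = h ^ n * g) ↔
    (∀ g h : G, ∃ m n : ℕ, 0 < m ∧ 0 < n ∧ g * h ^ m = h ^ n * g) := by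
  constructor
  · intro H g h
    obtain ⟨n, hn, hc⟩ := H g h
    exact ⟨n, n, hn, hn, hc⟩
  · intro H g h
    by_cases hfin : IsOfFinOrder h
    · refine ⟨orderOf h, hfin.orderOf_pos, ?_⟩
      rw [pow_orderOf_eq_one, mul_one, one_mul]
    · -- h has infinite order
      have hinj : Function.Injective (fun j : ℕ => h ^ j) :=
        injective_pow_iff_not_isOfFinOrder.mpr hfin
      obtain ⟨m, n, hm, hn, hA⟩ := H g h
      obtain ⟨s, t, hs, ht, hB⟩ := H h g
      suffices hmn : m = n by
        refine ⟨m, hm, ?_⟩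
        rw [hA, hmn]
      by_cases hst : s = t
      · -- g ^ s commutes with h
        subst hst
        have hAs := iter_rel hA s
        have hc2 : g ^ s * h ^ (m ^ s) = h ^ (m ^ s) * g ^ s := comm_pow hB.symm (m ^ s)
        have h4 : h ^ (m ^ s) * g ^ s = h ^ (n ^ s) * g ^ s := by rw [← hc2, hAs]
        have h5 : m ^ s = n ^ s := hinj (mul_right_cancel h4)
        exact Nat.pow_left_injective (show s ≠ 0 by omega) h5
      · -- s ≠ t
        have hAs := iter_rel hA s
        have hAt := iter_rel hA t
        have hgt : g ^ t = h * g ^ s * h⁻¹ := by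
          rw [eq_mul_inv_iff_mul_eq]; exact hB.symm
        have key1 : g ^ t * h ^ (m ^ s) = h ^ (n ^ s) * g ^ t := by
          rw [hgt]
          have e1 : h * g ^ s * h⁻¹ * h ^ (m ^ s) = h * (g ^ s * h ^ (m ^ s)) * h⁻¹ := by
            group
          rw [e1, hAs]
          group
        have e1 : g ^ t * h ^ (m ^ s * m ^ t) = h ^ (n ^ s * m ^ t) * g ^ t := by
          have := comm_pow key1 (m ^ t)
          rwa [← pow_mul, ← pow_mul] at this
        have e2 : g ^ t * h ^ (m ^ t * m ^ s) = h ^ (n ^ t * m ^ s) * g ^ t := by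
          have := comm_pow hAt (m ^ s)
          rwa [← pow_mul, ← pow_mul] at this
        rw [mul_comm (m ^ t) (m ^ s)] at e2
        have heq : h ^ (n ^ s * m ^ t) = h ^ (n ^ t * m ^ s) :=
          mul_right_cancel (e1.symm.trans e2)
        have hexp : n ^ s * m ^ t = n ^ t * m ^ s := hinj heq
        rcases Nat.lt_or_ge s t with h1 | h1
        · exact nat_cancel hm hn h1 (by linarith [hexp])
        · have h2 : t < s := lt_of_le_of_ne h1 (Ne.symm hst)
          exact (nat_cancel hn hm h2 (by linarith [hexp])).symm
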